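/- Let (V,g) be a Euclidean vector space and τ ∈ Λ³V with b(τ²) = 0. Then for every X ∈ V, the endomorphism τ_X annihilates τ under the natural action, i.e. (τ_X)_* τ = 0; consequently the Lie algebra g_τ ⊂ so(V) generated by {τ_X : X ∈ V} is contained in the stabilizer algebra stab(τ) = {α ∈ so(V) : α_* τ = 0}. -/

import Mathlib

open scoped InnerProductSpace

attribute [local instance 100] LieRing.ofAssociativeRing

/-- For a 3-form `τ` (encoded via `B` with `⟪B X Y, Z⟫ = τ(X,Y,Z)`) with
vanishing Bianchi sum `b(τ²) = 0`, each `τ_X` annihilates `τ` under the natural action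
(`(τ_X)_* τ = 0`), and consequently the Lie subalgebra of `End(V)` generated by the `τ_X`
is contained in the stabilizer `stab(τ) = {α : α_* τ = 0}`. -/
theorem stmt_4 {V : Type*} [NormedAddCommGroup V] [InnerProductSpace ℝ V]
    [FiniteDimensional ℝ V]
    (B : V →ₗ[ℝ] V →ₗ[ℝ] V)
    (halt1 : ∀ x y z, ⟪B x y, z⟫_ℝ = -⟪B y x, z⟫_ℝ)
    (halt2 : ∀ x y z, ⟪B x y, z⟫_ℝ = -⟪B x z, y⟫_ℝ)
    (hbianchi : ∀ X Y Z W : V,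
      ⟪B Z (B X Y), W⟫_ℝ + ⟪B X (B Y Z), W⟫_ℝ + ⟪B Y (B Z X), W⟫_ℝ = 0) :
    (∀ X Y Z W : V,
        ⟪B (B X Y) Z, W⟫_ℝ + ⟪B Y (B X Z), W⟫_ℝ + ⟪B Y Z, B X W⟫_ℝ = 0)
    ∧ (∀ A : Module.End ℝ V,
        A ∈ LieSubalgebra.lieSpan ℝ (Module.End ℝ V)
          (Set.range fun X : V => (B X : Module.End ℝ V)) →
        ∀ Y Z W : V,
          ⟪B (A Y) Z, W⟫_ℝ + ⟪B Y (A Z), W⟫_ℝ + ⟪B Y Z, A W⟫_ℝ = 0) := by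
  have key : ∀ a b c : V, ⟪B a b, c⟫_ℝ = -⟪b, B a c⟫_ℝ := by
    intro a b c
    rw [halt2 a b c, real_inner_comm]
  have h1 : ∀ X Y Z W : V,
      ⟪B (B X Y) Z, W⟫_ℝ + ⟪B Y (B X Z), W⟫_ℝ + ⟪B Y Z, B X W⟫_ℝ = 0 := by
    intro X Y Z W
    have h := hbianchi X Y Z W
    have e1 := halt1 (B X Y) Z W
    have e3 := key Z (B X Y) W
    have e2 := key Y (B X Z) W
    have e4 := key X (B Y Z) W
    have e5 := key Y (B Z X) W
    have e6 := halt1 Z X (B Y W)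
    have e7 : ⟪B X Z, B Y W⟫_ℝ = ⟪B Y W, B X Z⟫_ℝ := real_inner_comm _ _
    have e8 : ⟪B Z X, B Y W⟫_ℝ = ⟪B Y W, B Z X⟫_ℝ := real_inner_comm _ _
    linarith
  refine ⟨h1, ?_⟩
  let S : LieSubalgebra ℝ (Module.End ℝ V) :=
  { carrier := {A : Module.End ℝ V | ∀ Y Z W : V,
      ⟪B (A Y) Z, W⟫_ℝ + ⟪B Y (A Z), W⟫_ℝ + ⟪B Y Z, A W⟫_ℝ = 0}
    add_mem' := by
      intro a b ha hb Y Z W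
      have h1 := ha Y Z W
      have h2 := hb Y Z W
      simp only [LinearMap.add_apply, map_add, inner_add_left, inner_add_right,
        LinearMap.map_add] at *
      linarith
    zero_mem' := by
      intro Y Z W
      simp
    smul_mem' := by
      intro c a ha Y Z W
      have h1 := ha Y Z W
      simp only [LinearMap.smul_apply, map_smul, real_inner_smul_left,
        real_inner_smul_right] at *
      linear_combination c * h1
    lie_mem' := by
      intro a b ha hb Y Z W
      have h1 := ha (b Y) Z W
      have h2 := ha Y (b Z) W
      have h3 := ha Y Z (b W)
      have h4 := hb (a Y) Z W
      have h5 := hb Y (a Z) W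
      have h6 := hb Y Z (a W)
      simp only [Ring.lie_def, LinearMap.sub_apply, Module.End.mul_apply, map_sub,
        inner_sub_left, inner_sub_right] at *
      linarith }
  intro A hA
  have hle : LieSubalgebra.lieSpan ℝ (Module.End ℝ V)
      (Set.range fun X : V => (B X : Module.End ℝ V)) ≤ S := by
    rw [LieSubalgebra.lieSpan_le]
    rintro _ ⟨X, rfl⟩
    exact fun Y Z W => h1 X Y Z W
  exact hle hA
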